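/- (Corollary: Fuchsian case.) Assume each a_{j,r,n} belongs to ℂ{z} and that Λ_m ⊆ ℕ₀×{0}, and suppose the non-resonance condition W(n,0) ≠ 0 holds for every n ∈ ℕ₀, where W(λ,z) := Σ_{(j,0)∈Λ_m} a_{j,0,j−m}(z)·λ(λ−1)⋯(λ−(j−m)+1) so that W(n,0) = Σ_{(j,0)∈Λ_m} a_{j,0,j−m}(0)·n(n−1)⋯(n−(j−m)+1) (using the constant terms of the series a_{j,0,j−m}; the falling factorial equals 1 when j = m). Then the Fuchsian operator P(∂_t,∂_z)∂_t^{−m} is a bijective ℂ-linear map of ℂ[[t,z]] onto itself whose restriction to 𝒪[[t]] is a bijection of 𝒪[[t]] onto itself. -/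

import Mathlib

open PowerSeries

set_option synthInstance.maxHeartbeats 1000000
set_option maxHeartbeats 1000000

/-- Formal differentiation `∂_z` on `ℂ[[z]]` as a `ℂ`-linear map. -/
noncomputable def dz : PowerSeries ℂ →ₗ[ℂ] PowerSeries ℂ where
  toFun u := PowerSeries.mk fun n => ((n : ℂ) + 1) * PowerSeries.coeff (R := ℂ) (n + 1) u
  map_add' u v := by
    ext n
    simp [mul_add]
  map_smul' c u := by
    ext n
    simp
    ring

/-- The order of vanishing at `0` of a formal power series in `z`. -/
noncomputable def ordz (g : PowerSeries ℂ) : ℕ := sInf {k : ℕ | PowerSeries.coeff (R := ℂ) k g ≠ 0}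

/-- `ℂ[[t,z]]`, identified with formal power series in `t` with coefficients in `ℂ[[z]]`. -/
abbrev PS2 : Type := PowerSeries (PowerSeries ℂ)

lemma coeff2_smul (c : ℂ) (u : PS2) (n : ℕ) :
    PowerSeries.coeff (R := PowerSeries ℂ) n (c • u) =
      c • PowerSeries.coeff (R := PowerSeries ℂ) n u := rfl

/-- The order in `t` of an element of `ℂ[[t,z]]`. -/
noncomputable def ordT (g : PS2) : ℕ :=
  sInf {n : ℕ | PowerSeries.coeff (R := PowerSeries ℂ) n g ≠ 0}

/-- Formal differentiation `∂_t` on `ℂ[[t,z]]`. -/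
noncomputable def dt : PS2 →ₗ[ℂ] PS2 where
  toFun u := PowerSeries.mk fun n =>
    ((n : ℂ) + 1) • PowerSeries.coeff (R := PowerSeries ℂ) (n + 1) u
  map_add' u v := by
    ext n
    simp [smul_add]
  map_smul' c u := by
    ext n
    simp [coeff2_smul, smul_smul, mul_comm]

/-- Formal differentiation `∂_z` on `ℂ[[t,z]]`, acting on each coefficient `u_n ∈ ℂ[[z]]`. -/
noncomputable def dzc : PS2 →ₗ[ℂ] PS2 where
  toFun u := PowerSeries.mk fun n => dz (PowerSeries.coeff (R := PowerSeries ℂ) n u)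
  map_add' u v := by
    ext n
    simp
  map_smul' c u := by
    ext n
    simp [coeff2_smul]

/-- The integration operator `∂_t^{−m}` on `ℂ[[t,z]]`, sending `Σ u_n t^n` to
`Σ (n!/(n+m)!)·u_n t^{n+m}`. -/
noncomputable def dtInv (m : ℕ) : PS2 →ₗ[ℂ] PS2 where
  toFun u := PowerSeries.mk fun n =>
    if m ≤ n then
      ((((n - m).factorial : ℂ)) / (n.factorial : ℂ)) • PowerSeries.coeff (R := PowerSeries ℂ) (n - m) u
    else 0
  map_add' u v := by
    ext n
    simp only [PowerSeries.coeff_mk, map_add]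
    split <;> simp [smul_add]
  map_smul' c u := by
    ext n
    simp only [PowerSeries.coeff_mk, coeff2_smul, RingHom.id_apply]
    split <;> simp [coeff2_smul, smul_smul, mul_comm]

/-- The operator `P(∂_t,∂_z)∂_t^{−m}` on `ℂ[[t,z]]`, where
`P(∂_t,∂_z) u = Σ_{(j,r)∈Λ} a_{jr}·∂_t^j ∂_z^r u`. -/
noncomputable def POp (Λ : Finset (ℕ × ℕ)) (a : ℕ × ℕ → PS2) (m : ℕ) : PS2 →ₗ[ℂ] PS2 :=
  (∑ p ∈ Λ, (LinearMap.mulLeft ℂ (a p)).comp ((dt ^ p.1).comp (dzc ^ p.2))).comp (dtInv m)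

/-- The coefficient `b_{n,r} = Σ_{j : (j,r)∈Λ_m} n(n−1)⋯(n−(j−m)+1)·a_{j,r,j−m} ∈ ℂ[[z]]`,
where `M` is the integer `m = max_{(j,r)∈Λ}(j − ord_t(a_{jr}))`. -/
noncomputable def bcoef (Λ : Finset (ℕ × ℕ)) (a : ℕ × ℕ → PS2) (M : ℤ) (n r : ℕ) :
    PowerSeries ℂ :=
  ∑ p ∈ Λ.filter (fun p => p.2 = r ∧ (p.1 : ℤ) - (ordT (a p) : ℤ) = M),
    (n.descFactorial (p.1 - M.toNat) : ℂ) •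
      PowerSeries.coeff (R := PowerSeries ℂ) (p.1 - M.toNat) (a p)

/-- The operator `P̃_m(n,∂_z) v = Σ_r b_{n,r}·∂_z^r v` on `ℂ[[z]]`. -/
noncomputable def Ptil (Λ : Finset (ℕ × ℕ)) (a : ℕ × ℕ → PS2) (M : ℤ) (n : ℕ) :
    PowerSeries ℂ →ₗ[ℂ] PowerSeries ℂ :=
  ∑ r ∈ Λ.image Prod.snd, (LinearMap.mulLeft ℂ (bcoef Λ a M n r)).comp (dz ^ r)

/-- The quantity `W(n,k) = W_{m,0}(n,k,0)`: the sum over `(j,r) ∈ Λ_m` with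
`ord_z(a_{j,r,j−m}) = r` of `c_{j,r}·n(n−1)⋯(n−(j−m)+1)·k(k−1)⋯(k−r+1)`, where `c_{j,r}` is
the coefficient of `z^r` in `a_{j,r,j−m}`. -/
noncomputable def Wnk (Λ : Finset (ℕ × ℕ)) (a : ℕ × ℕ → PS2) (M : ℤ) (n k : ℕ) : ℂ :=
  ∑ p ∈ Λ.filter (fun p => (p.1 : ℤ) - (ordT (a p) : ℤ) = M ∧
      ordz (PowerSeries.coeff (R := PowerSeries ℂ) (p.1 - M.toNat) (a p)) = p.2),
    PowerSeries.coeff (R := ℂ) p.2 (PowerSeries.coeff (R := PowerSeries ℂ) (p.1 - M.toNat) (a p))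
      * (n.descFactorial (p.1 - M.toNat) : ℂ) * (k.descFactorial p.2 : ℂ)

/-- The set `ℂ[[z]]_s` of Gevrey series of order `s`: series `Σ v_k z^k` with
`|v_k| ≤ C·A^k·Γ(1+sk)` for some `C, A > 0`. -/
noncomputable def GevreyS (s : ℝ) : Set (PowerSeries ℂ) :=
  {u | ∃ C A : ℝ, 0 < C ∧ 0 < A ∧
    ∀ n : ℕ, ‖PowerSeries.coeff (R := ℂ) n u‖ ≤ C * A ^ n * Real.Gamma (1 + s * n)}

/-- `ℂ{z}`: power series with positive radius of convergence, i.e. with geometrically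
bounded coefficients. -/
noncomputable def Cz : Set (PowerSeries ℂ) :=
  {u | ∃ C A : ℝ, 0 < C ∧ 0 < A ∧ ∀ n : ℕ, ‖PowerSeries.coeff (R := ℂ) n u‖ ≤ C * A ^ n}

/-- `G_s[[t]]`: elements of `ℂ[[t,z]]` all of whose `t`-coefficients lie in `ℂ[[z]]_s`. -/
noncomputable def Gst (s : ℝ) : Set PS2 :=
  {u | ∀ n : ℕ, PowerSeries.coeff (R := PowerSeries ℂ) n u ∈ GevreyS s}

/-- `𝒪[[t]]`: elements of `ℂ[[t,z]]` all of whose `t`-coefficients lie in `ℂ{z}`. -/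
noncomputable def Ot : Set PS2 :=
  {u | ∀ n : ℕ, PowerSeries.coeff (R := PowerSeries ℂ) n u ∈ Cz}

/-- The characteristic polynomial for the Fuchsian case, evaluated at `n` and `z = 0`:
`W(n,0) = Σ_{(j,0)∈Λ_m} a_{j,0,j−m}(0)·n(n−1)⋯(n−(j−m)+1)`. -/
noncomputable def WFuchs (Λ : Finset (ℕ × ℕ)) (a : ℕ × ℕ → PS2) (M : ℤ) (n : ℕ) : ℂ :=
  ∑ p ∈ Λ.filter (fun p => (p.1 : ℤ) - (ordT (a p) : ℤ) = M),
    PowerSeries.coeff (R := ℂ) 0 (PowerSeries.coeff (R := PowerSeries ℂ) (p.1 - M.toNat) (a p))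
      * (n.descFactorial (p.1 - M.toNat) : ℂ)


/-! ### Auxiliary development for the Fuchsian corollary -/

section Stmt16Aux

open Finset

/-- Coefficients below the `t`-order vanish. -/
lemma st16_coeff_ordT {g : PS2} {i : ℕ} (h : i < ordT g) :
    PowerSeries.coeff (R := PowerSeries ℂ) i g = 0 := by
  by_contra hne
  exact Nat.notMem_of_lt_sInf h hne

lemma st16_coeff_dzc (u : PS2) (n : ℕ) :
    PowerSeries.coeff (R := PowerSeries ℂ) n (dzc u) = dz (PowerSeries.coeff (R := PowerSeries ℂ) n u) := by
  simp [dzc]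

lemma st16_coeff_dzc_pow (r : ℕ) (u : PS2) (n : ℕ) :
    PowerSeries.coeff (R := PowerSeries ℂ) n ((dzc ^ r) u) =
      (dz ^ r) (PowerSeries.coeff (R := PowerSeries ℂ) n u) := by
  induction r generalizing u with
  | zero => simp
  | succ r ih =>
      rw [pow_succ, Module.End.mul_apply, ih, st16_coeff_dzc, pow_succ, Module.End.mul_apply]

lemma st16_coeff_dt (u : PS2) (n : ℕ) :
    PowerSeries.coeff (R := PowerSeries ℂ) n (dt u) =
      ((n : ℂ) + 1) • PowerSeries.coeff (R := PowerSeries ℂ) (n + 1) u := by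
  simp [dt]

lemma st16_coeff_dt_pow (j : ℕ) (u : PS2) (l : ℕ) :
    PowerSeries.coeff (R := PowerSeries ℂ) l ((dt ^ j) u) =
      (((l + j).descFactorial j : ℕ) : ℂ) • PowerSeries.coeff (R := PowerSeries ℂ) (l + j) u := by
  induction j generalizing u with
  | zero => simp
  | succ j ih =>
      rw [pow_succ, Module.End.mul_apply, ih, st16_coeff_dt, smul_smul]
      have h1 : l + (j + 1) = l + j + 1 := by omega
      rw [h1, Nat.succ_descFactorial_succ]
      push_cast
      ring_nf

lemma st16_coeff_dtInv (m : ℕ) (u : PS2) (n : ℕ) :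
    PowerSeries.coeff (R := PowerSeries ℂ) n (dtInv m u) =
      if m ≤ n then
        ((((n - m).factorial : ℂ)) / (n.factorial : ℂ)) •
          PowerSeries.coeff (R := PowerSeries ℂ) (n - m) u
      else 0 := by
  simp [dtInv]

/-- The lower-triangular family of operators on `ℂ[[z]]` expressing `P(∂_t,∂_z)∂_t^{−m}`
coefficientwise. -/
noncomputable def Tmap (Λ : Finset (ℕ × ℕ)) (a : ℕ × ℕ → PS2) (m : ℕ) (n k : ℕ) :
    PowerSeries ℂ →ₗ[ℂ] PowerSeries ℂ :=
  ∑ p ∈ Λ.filter (fun p => p.1 ≤ k + m ∧ k + m ≤ n + p.1),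
    ((k.factorial : ℂ) / ((k + m - p.1).factorial : ℂ)) •
      ((LinearMap.mulLeft ℂ
          (PowerSeries.coeff (R := PowerSeries ℂ) (n + p.1 - (k + m)) (a p))).comp (dz ^ p.2))

/-- The diagonal multiplier. -/
noncomputable def Bn (Λ : Finset (ℕ × ℕ)) (a : ℕ × ℕ → PS2) (M : ℤ) (n : ℕ) :
    PowerSeries ℂ :=
  ∑ p ∈ Λ.filter (fun p => (p.1 : ℤ) - (ordT (a p) : ℤ) = M),
    ((n.descFactorial (p.1 - M.toNat) : ℕ) : ℂ) •
      PowerSeries.coeff (R := PowerSeries ℂ) (p.1 - M.toNat) (a p)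

lemma st16_Tmap_apply (Λ : Finset (ℕ × ℕ)) (a : ℕ × ℕ → PS2) (m n k : ℕ)
    (v : PowerSeries ℂ) :
    Tmap Λ a m n k v =
      ∑ p ∈ Λ,
        (if p.1 ≤ k + m ∧ k + m ≤ n + p.1 then
          ((k.factorial : ℂ) / ((k + m - p.1).factorial : ℂ)) •
            (PowerSeries.coeff (R := PowerSeries ℂ) (n + p.1 - (k + m)) (a p) * (dz ^ p.2) v)
        else 0) := by
  rw [Tmap, LinearMap.sum_apply, Finset.sum_filter]
  refine Finset.sum_congr rfl fun p _ => ?_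
  split
  · simp [LinearMap.mulLeft_apply]
  · rfl

lemma st16_descFactorial_cast (n d : ℕ) (h : d ≤ n) :
    ((n.descFactorial d : ℕ) : ℂ) = (n.factorial : ℂ) / ((n - d).factorial : ℂ) := by
  rw [eq_div_iff (by exact_mod_cast (n - d).factorial_ne_zero)]
  rw [← Nat.cast_mul]
  congr 1
  rw [mul_comm]
  exact Nat.factorial_mul_descFactorial h

/-- Expansion of one summand of `POp`. -/
lemma st16_coeff_term (a : ℕ × ℕ → PS2) (p : ℕ × ℕ) (m : ℕ)
    (hp : (p.1 : ℤ) - (ordT (a p) : ℤ) ≤ (m : ℤ)) (u : PS2) (n : ℕ) :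
    PowerSeries.coeff (R := PowerSeries ℂ) n (a p * (dt ^ p.1) ((dzc ^ p.2) (dtInv m u))) =
      ∑ k ∈ Finset.range (n + 1),
        (if p.1 ≤ k + m ∧ k + m ≤ n + p.1 then
          ((k.factorial : ℂ) / ((k + m - p.1).factorial : ℂ)) •
            (PowerSeries.coeff (R := PowerSeries ℂ) (n + p.1 - (k + m)) (a p) *
              (dz ^ p.2) (PowerSeries.coeff (R := PowerSeries ℂ) k u))
        else 0) := by
  have hco : ∀ l : ℕ,
      PowerSeries.coeff (R := PowerSeries ℂ) l ((dt ^ p.1) ((dzc ^ p.2) (dtInv m u))) =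
        if m ≤ l + p.1 then
          (((l + p.1 - m).factorial : ℂ) / (l.factorial : ℂ)) •
            (dz ^ p.2) (PowerSeries.coeff (R := PowerSeries ℂ) (l + p.1 - m) u)
        else 0 := by
    intro l
    rw [st16_coeff_dt_pow, st16_coeff_dzc_pow, st16_coeff_dtInv]
    split
    · rw [map_smul, smul_smul]
      congr 1
      rw [st16_descFactorial_cast (l + p.1) p.1 (by omega)]
      have h2 : l + p.1 - p.1 = l := by omega
      rw [h2]
      have hl : (l.factorial : ℂ) ≠ 0 := by exact_mod_cast l.factorial_ne_zero
      have hlp : ((l + p.1).factorial : ℂ) ≠ 0 := by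
        exact_mod_cast (l + p.1).factorial_ne_zero
      field_simp
    · rw [map_zero, smul_zero]
  rw [PowerSeries.coeff_mul, Finset.Nat.sum_antidiagonal_eq_sum_range_succ_mk]
  have hLHS : ∀ i ∈ Finset.range (n + 1),
      PowerSeries.coeff (R := PowerSeries ℂ) i (a p) *
          PowerSeries.coeff (R := PowerSeries ℂ) (n - i)
            ((dt ^ p.1) ((dzc ^ p.2) (dtInv m u))) =
        if m ≤ n - i + p.1 then
          PowerSeries.coeff (R := PowerSeries ℂ) i (a p) *
            ((((n - i + p.1 - m).factorial : ℂ) / ((n - i).factorial : ℂ)) •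
              (dz ^ p.2) (PowerSeries.coeff (R := PowerSeries ℂ) (n - i + p.1 - m) u))
        else 0 := by
    intro i _
    rw [hco]
    split
    · rfl
    · rw [mul_zero]
  rw [Finset.sum_congr rfl hLHS]
  rw [← Finset.sum_filter, ← Finset.sum_filter]
  -- now a bijection between the two index sets, after enlarging the right-hand one
  have hsub : (Finset.range (n + 1)).filter (fun k => p.1 ≤ k + m ∧ k + m ≤ n + p.1) ⊆
      (Finset.range (n + p.1 + 1)).filter (fun k => p.1 ≤ k + m ∧ k + m ≤ n + p.1) := by
    intro k hk
    simp only [Finset.mem_filter, Finset.mem_range] at hk ⊢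
    omega
  rw [Finset.sum_subset hsub ?hz]
  case hz =>
    intro k hk hk'
    simp only [Finset.mem_filter, Finset.mem_range] at hk hk'
    have hkc : p.1 ≤ k + m ∧ k + m ≤ n + p.1 := ⟨hk.2.1, hk.2.2⟩
    have hkn : ¬ k < n + 1 := fun h => hk' ⟨h, hkc.1, hkc.2⟩
    have hidx : n + p.1 - (k + m) < ordT (a p) := by omega
    rw [st16_coeff_ordT hidx, zero_mul, smul_zero]
  refine Finset.sum_nbij' (fun i => n + p.1 - (m + i)) (fun k => n + p.1 - (m + k))
    ?_ ?_ ?_ ?_ ?_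
  · intro i hi
    simp only [Finset.mem_filter, Finset.mem_range] at hi ⊢
    omega
  · intro k hk
    simp only [Finset.mem_filter, Finset.mem_range] at hk ⊢
    omega
  · intro i hi
    simp only [Finset.mem_filter, Finset.mem_range] at hi
    omega
  · intro k hk
    simp only [Finset.mem_filter, Finset.mem_range] at hk
    omega
  · intro i hi
    simp only [Finset.mem_filter, Finset.mem_range] at hi
    have e1 : n - i + p.1 - m = n + p.1 - (m + i) := by omega
    have e2 : n + p.1 - (n + p.1 - (m + i) + m) = i := by omega
    have e3 : n + p.1 - (m + i) + m - p.1 = n - i := by omega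
    rw [e1, e2, e3, mul_smul_comm]

/-- Coefficientwise formula for `POp`. -/
lemma st16_coeff_POp (Λ : Finset (ℕ × ℕ)) (a : ℕ × ℕ → PS2) (m : ℕ)
    (hord : ∀ p ∈ Λ, (p.1 : ℤ) - (ordT (a p) : ℤ) ≤ (m : ℤ)) (u : PS2) (n : ℕ) :
    PowerSeries.coeff (R := PowerSeries ℂ) n (POp Λ a m u) =
      ∑ k ∈ Finset.range (n + 1), Tmap Λ a m n k (PowerSeries.coeff (R := PowerSeries ℂ) k u) := by
  have h1 : POp Λ a m u =
      ∑ p ∈ Λ, a p * (dt ^ p.1) ((dzc ^ p.2) (dtInv m u)) := by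
    rw [POp, LinearMap.comp_apply, LinearMap.sum_apply]
    refine Finset.sum_congr rfl fun p _ => ?_
    simp [LinearMap.mulLeft_apply]
  rw [h1, map_sum]
  rw [Finset.sum_congr rfl (fun p hp => st16_coeff_term a p m (hord p hp) u n)]
  rw [Finset.sum_comm]
  refine Finset.sum_congr rfl fun k _ => ?_
  rw [st16_Tmap_apply]

lemma st16_Tmap_triangle (Λ : Finset (ℕ × ℕ)) (a : ℕ × ℕ → PS2) (m : ℕ)
    (hord : ∀ p ∈ Λ, (p.1 : ℤ) - (ordT (a p) : ℤ) ≤ (m : ℤ)) {n k : ℕ} (h : n < k) :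
    Tmap Λ a m n k = 0 := by
  rw [Tmap]
  apply Finset.sum_eq_zero
  intro p hp
  simp only [Finset.mem_filter] at hp
  have hidx : n + p.1 - (k + m) < ordT (a p) := by
    have := hord p hp.1
    omega
  apply LinearMap.ext
  intro v
  simp [st16_coeff_ordT hidx, LinearMap.mulLeft_apply]

lemma st16_coeff0_Bn (Λ : Finset (ℕ × ℕ)) (a : ℕ × ℕ → PS2) (M : ℤ) (n : ℕ) :
    PowerSeries.constantCoeff (R := ℂ) (Bn Λ a M n) = WFuchs Λ a M n := by
  rw [Bn, WFuchs, ← PowerSeries.coeff_zero_eq_constantCoeff_apply, map_sum]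
  refine Finset.sum_congr rfl fun p _ => ?_
  rw [map_smul, smul_eq_mul, mul_comm]

lemma st16_Tmap_diag (Λ : Finset (ℕ × ℕ)) (a : ℕ × ℕ → PS2) (M : ℤ) (m : ℕ)
    (hMm : (m : ℤ) = M)
    (hord : ∀ p ∈ Λ, (p.1 : ℤ) - (ordT (a p) : ℤ) ≤ (m : ℤ))
    (hfuchs : ∀ p ∈ Λ, (p.1 : ℤ) - (ordT (a p) : ℤ) = M → p.2 = 0)
    (n : ℕ) (v : PowerSeries ℂ) :
    Tmap Λ a m n n v = Bn Λ a M n * v := by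
  have hmn : M.toNat = m := by omega
  rw [st16_Tmap_apply, Bn, Finset.sum_mul, Finset.sum_filter]
  refine Finset.sum_congr rfl fun p hp => ?_
  by_cases hc2 : (p.1 : ℤ) - (ordT (a p) : ℤ) = M
  · rw [if_pos hc2]
    have hr : p.2 = 0 := hfuchs p hp hc2
    by_cases hc1 : p.1 ≤ n + m ∧ n + m ≤ n + p.1
    · rw [if_pos hc1]
      have h1 : n + p.1 - (n + m) = p.1 - M.toNat := by omega
      have h2 : p.1 - M.toNat ≤ n := by omega
      have h3 : n + m - p.1 = n - (p.1 - M.toNat) := by omega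
      rw [h1, h3, hr, pow_zero, Module.End.one_apply, smul_mul_assoc]
      congr 1
      rw [st16_descFactorial_cast n (p.1 - M.toNat) h2]
    · rw [if_neg hc1]
      have hge : (m : ℤ) ≤ (p.1 : ℤ) := by omega
      have h4 : n < p.1 - M.toNat := by omega
      rw [Nat.descFactorial_eq_zero_iff_lt.mpr h4]
      simp
  · rw [if_neg hc2]
    by_cases hc1 : p.1 ≤ n + m ∧ n + m ≤ n + p.1
    · rw [if_pos hc1]
      have hidx : n + p.1 - (n + m) < ordT (a p) := by
        have := hord p hp
        omega
      rw [st16_coeff_ordT hidx, zero_mul, smul_zero]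
    · rw [if_neg hc1]

/-- Recursive solution of the triangular system. -/
noncomputable def solFun (T : ℕ → ℕ → (PowerSeries ℂ →ₗ[ℂ] PowerSeries ℂ))
    (Bi : ℕ → PowerSeries ℂ) (g : PS2) : ℕ → PowerSeries ℂ
  | n => Bi n * (PowerSeries.coeff (R := PowerSeries ℂ) n g -
      ∑ k ∈ (Finset.range n).attach, T n k.1 (solFun T Bi g k.1))
  termination_by n => n
  decreasing_by exact Finset.mem_range.mp k.2

lemma solFun_eq (T : ℕ → ℕ → (PowerSeries ℂ →ₗ[ℂ] PowerSeries ℂ))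
    (Bi : ℕ → PowerSeries ℂ) (g : PS2) (n : ℕ) :
    solFun T Bi g n = Bi n * (PowerSeries.coeff (R := PowerSeries ℂ) n g -
      ∑ k ∈ Finset.range n, T n k (solFun T Bi g k)) := by
  rw [solFun]
  congr 1
  rw [Finset.sum_attach (Finset.range n) (fun k => T n k (solFun T Bi g k))]

/-! ### Closure properties of `ℂ{z}` -/

lemma cz_zero : (0 : PowerSeries ℂ) ∈ Cz :=
  ⟨1, 1, one_pos, one_pos, by simp⟩

lemma cz_add {f g : PowerSeries ℂ} (hf : f ∈ Cz) (hg : g ∈ Cz) : f + g ∈ Cz := by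
  obtain ⟨C1, A1, hC1, hA1, h1⟩ := hf
  obtain ⟨C2, A2, hC2, hA2, h2⟩ := hg
  refine ⟨C1 + C2, max A1 A2, by linarith, lt_max_of_lt_left hA1, fun n => ?_⟩
  have e1 : A1 ^ n ≤ (max A1 A2) ^ n := pow_le_pow_left₀ hA1.le (le_max_left _ _) n
  have e2 : A2 ^ n ≤ (max A1 A2) ^ n := pow_le_pow_left₀ hA2.le (le_max_right _ _) n
  calc ‖PowerSeries.coeff (R := ℂ) n (f + g)‖ ≤
      ‖PowerSeries.coeff (R := ℂ) n f‖ + ‖PowerSeries.coeff (R := ℂ) n g‖ := by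
        rw [map_add]; exact norm_add_le _ _
    _ ≤ C1 * A1 ^ n + C2 * A2 ^ n := add_le_add (h1 n) (h2 n)
    _ ≤ (C1 + C2) * (max A1 A2) ^ n := by nlinarith

lemma cz_smul (c : ℂ) {f : PowerSeries ℂ} (hf : f ∈ Cz) : c • f ∈ Cz := by
  obtain ⟨C, A, hC, hA, h⟩ := hf
  refine ⟨(‖c‖ + 1) * C, A, by positivity, hA, fun n => ?_⟩
  rw [map_smul, smul_eq_mul, norm_mul]
  have h1 : ‖c‖ * ‖PowerSeries.coeff (R := ℂ) n f‖ ≤ ‖c‖ * (C * A ^ n) :=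
    mul_le_mul_of_nonneg_left (h n) (norm_nonneg c)
  have h2 : 0 ≤ C * A ^ n := by positivity
  nlinarith [norm_nonneg c]

lemma cz_sub {f g : PowerSeries ℂ} (hf : f ∈ Cz) (hg : g ∈ Cz) : f - g ∈ Cz := by
  have := cz_add hf (cz_smul (-1 : ℂ) hg)
  simpa [sub_eq_add_neg] using this

lemma cz_sum {ι : Type*} {s : Finset ι} {f : ι → PowerSeries ℂ}
    (h : ∀ i ∈ s, f i ∈ Cz) : (∑ i ∈ s, f i) ∈ Cz :=
  Finset.sum_induction f (· ∈ Cz) (fun _ _ ha hb => cz_add ha hb) cz_zero h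

lemma st16_nat_le_two_pow (n : ℕ) : ((n : ℝ) + 1) ≤ 2 ^ n := by
  have := Nat.lt_two_pow_self (n := n)
  have h : (n + 1 : ℕ) ≤ 2 ^ n := this
  exact_mod_cast h

lemma cz_mul {f g : PowerSeries ℂ} (hf : f ∈ Cz) (hg : g ∈ Cz) : f * g ∈ Cz := by
  obtain ⟨C1, A1, hC1, hA1, h1⟩ := hf
  obtain ⟨C2, A2, hC2, hA2, h2⟩ := hg
  set B := max A1 A2 with hB
  have hBpos : 0 < B := lt_max_of_lt_left hA1
  refine ⟨C1 * C2, 2 * B, by positivity, by positivity, fun n => ?_⟩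
  rw [PowerSeries.coeff_mul]
  calc ‖∑ x ∈ Finset.HasAntidiagonal.antidiagonal n, PowerSeries.coeff (R := ℂ) x.1 f * PowerSeries.coeff (R := ℂ) x.2 g‖
      ≤ ∑ x ∈ Finset.HasAntidiagonal.antidiagonal n, ‖PowerSeries.coeff (R := ℂ) x.1 f * PowerSeries.coeff (R := ℂ) x.2 g‖ :=
        norm_sum_le _ _
    _ ≤ ∑ _x ∈ Finset.HasAntidiagonal.antidiagonal n, C1 * C2 * B ^ n := by
        refine Finset.sum_le_sum fun x hx => ?_
        rw [norm_mul]
        have e1 : ‖PowerSeries.coeff (R := ℂ) x.1 f‖ ≤ C1 * A1 ^ x.1 := h1 x.1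
        have e2 : ‖PowerSeries.coeff (R := ℂ) x.2 g‖ ≤ C2 * A2 ^ x.2 := h2 x.2
        have e3 : A1 ^ x.1 ≤ B ^ x.1 := pow_le_pow_left₀ hA1.le (le_max_left _ _) _
        have e4 : A2 ^ x.2 ≤ B ^ x.2 := pow_le_pow_left₀ hA2.le (le_max_right _ _) _
        have e5 : B ^ x.1 * B ^ x.2 = B ^ n := by
          rw [← pow_add]
          congr 1
          exact Finset.HasAntidiagonal.mem_antidiagonal.mp hx
        calc ‖PowerSeries.coeff (R := ℂ) x.1 f‖ * ‖PowerSeries.coeff (R := ℂ) x.2 g‖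
            ≤ (C1 * A1 ^ x.1) * (C2 * A2 ^ x.2) :=
              mul_le_mul e1 e2 (norm_nonneg _) (by positivity)
          _ ≤ (C1 * B ^ x.1) * (C2 * B ^ x.2) := by
              refine mul_le_mul ?_ ?_ (by positivity) (by positivity)
              · exact mul_le_mul_of_nonneg_left e3 hC1.le
              · exact mul_le_mul_of_nonneg_left e4 hC2.le
          _ = C1 * C2 * B ^ n := by rw [← e5]; ring
    _ = ((n : ℝ) + 1) * (C1 * C2 * B ^ n) := by
        rw [Finset.sum_const, Finset.Nat.card_antidiagonal, nsmul_eq_mul]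
        push_cast
        ring
    _ ≤ C1 * C2 * (2 * B) ^ n := by
        have := st16_nat_le_two_pow n
        have hbn : (0:ℝ) ≤ B ^ n := by positivity
        have h2n : ((n : ℝ) + 1) * B ^ n ≤ 2 ^ n * B ^ n :=
          mul_le_mul_of_nonneg_right this hbn
        rw [mul_pow]
        nlinarith [mul_pos hC1 hC2]

lemma cz_dz {f : PowerSeries ℂ} (hf : f ∈ Cz) : dz f ∈ Cz := by
  obtain ⟨C, A, hC, hA, h⟩ := hf
  refine ⟨C * A, 2 * A, by positivity, by positivity, fun n => ?_⟩
  have hco : PowerSeries.coeff (R := ℂ) n (dz f) = ((n : ℂ) + 1) * PowerSeries.coeff (R := ℂ) (n + 1) f := by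
    simp [dz]
  rw [hco, norm_mul]
  have e1 : ‖((n : ℂ) + 1)‖ = (n : ℝ) + 1 := by
    rw [show ((n : ℂ) + 1) = ((n + 1 : ℕ) : ℂ) by push_cast; ring]
    rw [Complex.norm_natCast]
    push_cast
    ring
  rw [e1]
  have e2 : ‖PowerSeries.coeff (R := ℂ) (n + 1) f‖ ≤ C * A ^ (n + 1) := h (n + 1)
  have e3 : ((n : ℝ) + 1) * ‖PowerSeries.coeff (R := ℂ) (n + 1) f‖ ≤
      ((n : ℝ) + 1) * (C * A ^ (n + 1)) := by
    apply mul_le_mul_of_nonneg_left e2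
    positivity
  refine e3.trans ?_
  have e4 : ((n : ℝ) + 1) ≤ 2 ^ n := st16_nat_le_two_pow n
  have e5 : ((n : ℝ) + 1) * (C * A ^ (n + 1)) = (((n : ℝ) + 1) * A ^ n) * (C * A) := by ring
  have e6 : (2 : ℝ) ^ n * A ^ n = (2 * A) ^ n := by rw [mul_pow]
  have e7 : ((n : ℝ) + 1) * A ^ n ≤ (2 * A) ^ n := by
    rw [← e6]
    apply mul_le_mul_of_nonneg_right e4
    positivity
  rw [e5]
  have : (0:ℝ) < C * A := by positivity
  nlinarith
lemma cz_dz_pow (r : ℕ) {f : PowerSeries ℂ} (hf : f ∈ Cz) : (dz ^ r) f ∈ Cz := by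
  induction r generalizing f with
  | zero => simpa using hf
  | succ r ih =>
      rw [pow_succ, Module.End.mul_apply]
      exact ih (cz_dz hf)

/-- Geometric sum bound. -/
lemma st16_geom_bound {x : ℝ} (hx0 : 0 ≤ x) (hx1 : x < 1) (N : ℕ) :
    ∑ i ∈ Finset.range N, x ^ i ≤ 1 / (1 - x) := by
  rw [le_div_iff₀ (by linarith)]
  nlinarith [geom_sum_mul x N, pow_nonneg hx0 N]

/-- The inverse of a convergent power series with nonzero constant term is convergent. -/
lemma cz_inv {f : PowerSeries ℂ} (hf : f ∈ Cz)
    (h0 : PowerSeries.constantCoeff (R := ℂ) f ≠ 0) : f⁻¹ ∈ Cz := by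
  obtain ⟨C, A, hC, hA, h⟩ := hf
  set c0 : ℂ := PowerSeries.constantCoeff (R := ℂ) f with hc0
  have hc0n : (0:ℝ) < ‖c0‖ := norm_pos_iff.mpr h0
  set B : ℝ := ‖c0‖⁻¹ with hBdef
  have hBpos : 0 < B := by positivity
  set D : ℝ := C / ‖c0‖ with hDdef
  have hDpos : 0 < D := by positivity
  set R : ℝ := A * (1 + D) with hRdef
  have hRpos : 0 < R := by positivity
  have hAR : A < R := by nlinarith
  refine ⟨B, R, hBpos, hRpos, fun n => ?_⟩
  induction n using Nat.strong_induction_on with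
  | _ n ih =>
    match n with
    | 0 =>
        rw [PowerSeries.coeff_inv, if_pos rfl]
        simp only [pow_zero, mul_one]
        rw [norm_inv]
    | (n + 1) =>
        rw [PowerSeries.coeff_inv, if_neg (Nat.succ_ne_zero n)]
        rw [norm_mul, norm_neg, norm_inv]
        set S := ∑ x ∈ Finset.HasAntidiagonal.antidiagonal (n + 1),
          if x.2 < n + 1 then PowerSeries.coeff (R := ℂ) x.1 f * PowerSeries.coeff (R := ℂ) x.2 f⁻¹ else 0
          with hS
        have hSbound : ‖S‖ ≤ ‖c0‖ * (B * R ^ (n + 1)) := by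
          rw [hS, Finset.Nat.sum_antidiagonal_eq_sum_range_succ_mk]
          set x : ℝ := A / R with hxdef
          have hx0 : 0 ≤ x := by positivity
          have hx1 : x < 1 := by
            rw [hxdef, div_lt_one hRpos]
            exact hAR
          calc ‖∑ i ∈ Finset.range (n + 2),
                if n + 1 - i < n + 1 then
                  PowerSeries.coeff (R := ℂ) i f * PowerSeries.coeff (R := ℂ) (n + 1 - i) f⁻¹ else 0‖
              ≤ ∑ i ∈ Finset.range (n + 2),
                  ‖if n + 1 - i < n + 1 then
                    PowerSeries.coeff (R := ℂ) i f * PowerSeries.coeff (R := ℂ) (n + 1 - i) f⁻¹ else 0‖ :=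
                norm_sum_le _ _
            _ ≤ ∑ i ∈ Finset.range (n + 2),
                  (if 1 ≤ i then C * B * R ^ (n + 1) * x ^ i else 0) := by
                refine Finset.sum_le_sum fun i hi => ?_
                simp only [Finset.mem_range] at hi
                by_cases h1i : 1 ≤ i
                · rw [if_pos (by omega), if_pos h1i, norm_mul]
                  have e1 : ‖PowerSeries.coeff (R := ℂ) i f‖ ≤ C * A ^ i := h i
                  have e2 : ‖PowerSeries.coeff (R := ℂ) (n + 1 - i) f⁻¹‖ ≤ B * R ^ (n + 1 - i) :=
                    ih (n + 1 - i) (by omega)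
                  have e3 : C * A ^ i * (B * R ^ (n + 1 - i)) =
                      C * B * (A ^ i * R ^ (n + 1 - i)) := by ring
                  have e4 : A ^ i * R ^ (n + 1 - i) = R ^ (n + 1) * x ^ i := by
                    have hsplit : R ^ (n + 1) = R ^ (n + 1 - i) * R ^ i := by
                      rw [← pow_add]
                      congr 1
                      omega
                    rw [hxdef, div_pow, hsplit]
                    have hRi : (R : ℝ) ^ i ≠ 0 := by positivity
                    field_simp
                  calc ‖PowerSeries.coeff (R := ℂ) i f‖ * ‖PowerSeries.coeff (R := ℂ) (n + 1 - i) f⁻¹‖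
                      ≤ (C * A ^ i) * (B * R ^ (n + 1 - i)) := by
                        apply mul_le_mul e1 e2 (norm_nonneg _) (by positivity)
                    _ = C * B * R ^ (n + 1) * x ^ i := by rw [e3, e4]; ring
                · have hi0 : i = 0 := by omega
                  rw [if_neg (by omega), if_neg h1i]
                  simp
            _ = C * B * R ^ (n + 1) * ∑ i ∈ Finset.range (n + 2),
                  (if 1 ≤ i then x ^ i else 0) := by
                rw [Finset.mul_sum]
                refine Finset.sum_congr rfl fun i _ => ?_
                split <;> simp
            _ ≤ ‖c0‖ * (B * R ^ (n + 1)) := by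
                have hgs : ∑ i ∈ Finset.range (n + 2), (if 1 ≤ i then x ^ i else 0) ≤
                    x / (1 - x) := by
                  rw [Finset.sum_range_succ']
                  simp only [if_neg (by omega : ¬ (1:ℕ) ≤ 0), add_zero]
                  have : ∀ i ∈ Finset.range (n + 1),
                      (if 1 ≤ i + 1 then x ^ (i + 1) else 0) = x * x ^ i := by
                    intro i _
                    rw [if_pos (by omega), pow_succ]
                    ring
                  rw [Finset.sum_congr rfl this, ← Finset.mul_sum]
                  have hg := st16_geom_bound hx0 hx1 (n + 1)
                  rw [div_eq_mul_one_div]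
                  exact mul_le_mul_of_nonneg_left hg hx0
                have hxd : x / (1 - x) = 1 / D := by
                  have h1x : (0:ℝ) < 1 - x := by linarith
                  rw [div_eq_div_iff h1x.ne' hDpos.ne']
                  rw [hxdef, hRdef]
                  have hA0 : A ≠ 0 := ne_of_gt hA
                  have h1D : (1:ℝ) + D ≠ 0 := by positivity
                  field_simp
                  ring
                have hkey : C * B * R ^ (n + 1) * (x / (1 - x)) = ‖c0‖ * (B * R ^ (n + 1)) := by
                  rw [hxd, hDdef]
                  field_simp
                calc C * B * R ^ (n + 1) * ∑ i ∈ Finset.range (n + 2),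
                      (if 1 ≤ i then x ^ i else 0)
                    ≤ C * B * R ^ (n + 1) * (x / (1 - x)) := by
                      apply mul_le_mul_of_nonneg_left hgs
                      positivity
                  _ = ‖c0‖ * (B * R ^ (n + 1)) := hkey
        calc ‖c0‖⁻¹ * ‖S‖ ≤ ‖c0‖⁻¹ * (‖c0‖ * (B * R ^ (n + 1))) := by
              apply mul_le_mul_of_nonneg_left hSbound
              positivity
          _ = B * R ^ (n + 1) := by
              rw [inv_mul_cancel_left₀ (ne_of_gt hc0n)]

lemma cz_Tmap (Λ : Finset (ℕ × ℕ)) (a : ℕ × ℕ → PS2) (m : ℕ)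
    (hconv : ∀ p ∈ Λ, ∀ n : ℕ, PowerSeries.coeff (R := PowerSeries ℂ) n (a p) ∈ Cz)
    (n k : ℕ) {v : PowerSeries ℂ} (hv : v ∈ Cz) : Tmap Λ a m n k v ∈ Cz := by
  rw [st16_Tmap_apply]
  refine cz_sum fun p hp => ?_
  split
  · exact cz_smul _ (cz_mul (hconv p hp _) (cz_dz_pow _ hv))
  · exact cz_zero

lemma cz_Bn (Λ : Finset (ℕ × ℕ)) (a : ℕ × ℕ → PS2) (M : ℤ)
    (hconv : ∀ p ∈ Λ, ∀ n : ℕ, PowerSeries.coeff (R := PowerSeries ℂ) n (a p) ∈ Cz)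
    (n : ℕ) : Bn Λ a M n ∈ Cz := by
  rw [Bn]
  refine cz_sum fun p hp => ?_
  exact cz_smul _ (hconv p (Finset.mem_filter.mp hp).1 _)

end Stmt16Aux

/-- Corollary (Fuchsian case): if each `a_{j,r,n} ∈ ℂ{z}`, `Λ_m ⊆ ℕ₀×{0}`, and the
non-resonance condition `W(n,0) ≠ 0` holds for every `n ∈ ℕ₀`, then the Fuchsian operator
`P(∂_t,∂_z)∂_t^{−m}` is a bijective `ℂ`-linear map of `ℂ[[t,z]]` onto itself restricting
to a bijection of `𝒪[[t]]` onto itself. -/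
theorem statement16 (Λ : Finset (ℕ × ℕ)) (hΛ : Λ.Nonempty) (a : ℕ × ℕ → PS2)
    (ha : ∀ p ∈ Λ, a p ≠ 0)
    (hconv : ∀ p ∈ Λ, ∀ n : ℕ, PowerSeries.coeff (R := PowerSeries ℂ) n (a p) ∈ Cz)
    (M : ℤ) (hM : M = Λ.sup' hΛ (fun p => (p.1 : ℤ) - (ordT (a p) : ℤ))) (hM0 : 0 ≤ M)
    (hfuchs : ∀ p ∈ Λ, (p.1 : ℤ) - (ordT (a p) : ℤ) = M → p.2 = 0)
    (hres : ∀ n : ℕ, WFuchs Λ a M n ≠ 0) :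
    Function.Bijective (POp Λ a M.toNat) ∧
      Set.BijOn (POp Λ a M.toNat) Ot Ot := by
  set m := M.toNat with hm
  have hMm : (m : ℤ) = M := Int.toNat_of_nonneg hM0
  have hord : ∀ p ∈ Λ, (p.1 : ℤ) - (ordT (a p) : ℤ) ≤ (m : ℤ) := by
    intro p hp
    rw [hMm, hM]
    exact Finset.le_sup' (fun p => (p.1 : ℤ) - (ordT (a p) : ℤ)) hp
  have hBc : ∀ n : ℕ, PowerSeries.constantCoeff (R := ℂ) (Bn Λ a M n) ≠ 0 := by
    intro n
    rw [st16_coeff0_Bn]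
    exact hres n
  have hBne : ∀ n : ℕ, Bn Λ a M n ≠ 0 := by
    intro n h0
    exact hBc n (by rw [h0, map_zero])
  have key : ∀ (u : PS2) (n : ℕ),
      PowerSeries.coeff (R := PowerSeries ℂ) n (POp Λ a m u) =
        Bn Λ a M n * PowerSeries.coeff (R := PowerSeries ℂ) n u +
          ∑ k ∈ Finset.range n, Tmap Λ a m n k (PowerSeries.coeff (R := PowerSeries ℂ) k u) := by
    intro u n
    rw [st16_coeff_POp Λ a m hord, Finset.sum_range_succ,
      st16_Tmap_diag Λ a M m hMm hord hfuchs, add_comm]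
  -- injectivity
  have hinj : Function.Injective (POp Λ a m) := by
    rw [injective_iff_map_eq_zero]
    intro u hu
    have hz : ∀ n : ℕ, PowerSeries.coeff (R := PowerSeries ℂ) n u = 0 := by
      intro n
      induction n using Nat.strong_induction_on with
      | _ n ih =>
        have h := key u n
        rw [hu, map_zero] at h
        have hsum : ∑ k ∈ Finset.range n,
            Tmap Λ a m n k (PowerSeries.coeff (R := PowerSeries ℂ) k u) = 0 := by
          refine Finset.sum_eq_zero fun k hk => ?_
          rw [ih k (Finset.mem_range.mp hk), map_zero]
        rw [hsum, add_zero] at h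
        rcases mul_eq_zero.mp h.symm with h' | h'
        · exact absurd h' (hBne n)
        · exact h'
    refine PowerSeries.ext fun n => ?_
    rw [hz n, map_zero]
  -- the recursive solution
  have hsolve : ∀ g : PS2,
      POp Λ a m (PowerSeries.mk (solFun (Tmap Λ a m) (fun n => (Bn Λ a M n)⁻¹) g)) = g := by
    intro g
    refine PowerSeries.ext fun n => ?_
    rw [key]
    have hcoeff : ∀ k : ℕ, PowerSeries.coeff (R := PowerSeries ℂ) k
        (PowerSeries.mk (solFun (Tmap Λ a m) (fun n => (Bn Λ a M n)⁻¹) g)) =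
        solFun (Tmap Λ a m) (fun n => (Bn Λ a M n)⁻¹) g k := fun k => PowerSeries.coeff_mk k _
    rw [hcoeff n]
    rw [Finset.sum_congr rfl (fun k _ => by rw [hcoeff k])]
    conv_lhs => rw [solFun_eq]
    rw [← mul_assoc, PowerSeries.mul_inv_cancel _ (hBc n), one_mul]
    ring
  have hsurj : Function.Surjective (POp Λ a m) :=
    fun g => ⟨PowerSeries.mk (solFun (Tmap Λ a m) (fun n => (Bn Λ a M n)⁻¹) g), hsolve g⟩
  -- mapping properties on Ot
  have hmaps : Set.MapsTo (POp Λ a m) Ot Ot := by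
    intro u hu n
    rw [st16_coeff_POp Λ a m hord]
    exact cz_sum fun k _ => cz_Tmap Λ a m hconv n k (hu k)
  have hsol_cz : ∀ g : PS2, g ∈ Ot → ∀ n : ℕ,
      solFun (Tmap Λ a m) (fun n => (Bn Λ a M n)⁻¹) g n ∈ Cz := by
    intro g hg n
    induction n using Nat.strong_induction_on with
    | _ n ih =>
      rw [solFun_eq]
      refine cz_mul (cz_inv (cz_Bn Λ a M hconv n) (hBc n)) ?_
      refine cz_sub (hg n) (cz_sum fun k hk => ?_)
      exact cz_Tmap Λ a m hconv n k (ih k (Finset.mem_range.mp hk))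
  have hsurjOn : Set.SurjOn (POp Λ a m) Ot Ot := by
    intro g hg
    refine ⟨PowerSeries.mk (solFun (Tmap Λ a m) (fun n => (Bn Λ a M n)⁻¹) g), ?_, hsolve g⟩
    intro n
    rw [PowerSeries.coeff_mk]
    exact hsol_cz g hg n
  exact ⟨⟨hinj, hsurj⟩, hmaps, hinj.injOn, hsurjOn⟩
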